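/- Let (M, ω) be a complex manifold with a holomorphic symplectic form ω, c = ω^{-1} the holomorphic Poisson bivector, c₁ = Re c, c₂ = Im c, ω₁ = Re ω, ω₂ = Im ω. Then for every λ ∈ ℝ, (c₁ + λ c₂)^♯ ∘ (ω₁ − λ ω₂)^♭ = ((1+λ²)/4) · id_{TM}; in particular c₁ + λ c₂ is a nondegenerate real bivector field for all λ ∈ ℝ, with inverse 2-form (4/(1+λ²))(ω₁ − λ ω₂). -/

import Mathlib

open Module

/-- on a holomorphic symplectic manifold (M, ω) with c = ω⁻¹,
c₁ = Re c, c₂ = Im c, ω₁ = Re ω, ω₂ = Im ω, one has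
(c₁ + λc₂)♯ ∘ (ω₁ − λω₂)♭ = ((1+λ²)/4)·id; in particular c₁ + λc₂ is a
nondegenerate real bivector with inverse 2-form (4/(1+λ²))(ω₁ − λω₂).

Pointwise model: W is the (holomorphic) tangent space, a finite-dimensional
complex vector space; ω is a nondegenerate ℂ-bilinear alternating form with
inverse bivector c (ω w (c f) = f w); a real covector f corresponds to the
(1,0)-form f − i f(i·) = extendTo𝕜' f, and under the standard identification
Re c and Im c act on real covectors by
(Re c) f = ¼ c(f^{1,0}), (Im c) f = −¼ i·c(f^{1,0}), while
(ω₁ − λω₂)♭ v = Re(ω(·,v)) − λ Im(ω(·,v)). -/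
theorem stmt9 (W : Type*) [AddCommGroup W] [Module ℂ W] [FiniteDimensional ℂ W]
    (ω : W →ₗ[ℂ] W →ₗ[ℂ] ℂ) (halt : ∀ v : W, ω v v = 0)
    (c : Module.Dual ℂ W →ₗ[ℂ] W)
    (hc : ∀ (f : Module.Dual ℂ W) (w : W), ω w (c f) = f w)
    (c₁ c₂ : Module.Dual ℝ W → W)
    (hc₁ : ∀ f : Module.Dual ℝ W, c₁ f = (4⁻¹ : ℝ) • c (LinearMap.extendTo𝕜' f))
    (hc₂ : ∀ f : Module.Dual ℝ W,
      c₂ f = -((4⁻¹ : ℝ) • (Complex.I • c (LinearMap.extendTo𝕜' f))))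
    (lam : ℝ)
    (flat : W → Module.Dual ℝ W)
    (hflat : ∀ v : W, flat v
      = (Complex.reLm - lam • Complex.imLm) ∘ₗ ((ω.flip v).restrictScalars ℝ)) :
    (∀ v : W, c₁ (flat v) + lam • c₂ (flat v) = (((1 + lam ^ 2) / 4 : ℝ)) • v) ∧
    Function.Bijective (fun f : Module.Dual ℝ W => c₁ f + lam • c₂ f) ∧
    (∀ f : Module.Dual ℝ W,
      flat (c₁ f + lam • c₂ f) = ((1 + lam ^ 2) / 4 : ℝ) • f) := by
  -- real smul is complex smul
  have hreal : ∀ (r : ℝ) (x : W), r • x = (r : ℂ) • x := by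
    intro r x
    rw [← smul_one_smul ℂ r x]
    norm_num
  -- flat applied
  have hflat' : ∀ v w : W, flat v w = (ω w v).re - lam * (ω w v).im := by
    intro v w
    rw [hflat]
    simp
  -- ω.flip bijective
  have hrt : ∀ (f : Module.Dual ℂ W), ω.flip (c f) = f := by
    intro f; ext w; simp [hc]
  have hsurj : Function.Surjective ω.flip := fun f => ⟨c f, hrt f⟩
  have hinj : Function.Injective ω.flip :=
    (LinearMap.injective_iff_surjective_of_finrank_eq_finrank
      (Subspace.dual_finrank_eq).symm).mpr hsurj
  have hcflip : ∀ v : W, c (ω.flip v) = v := by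
    intro v
    exact hinj (hrt (ω.flip v))
  -- key computation of extendTo𝕜' (flat v)
  have hE : ∀ v : W, LinearMap.extendTo𝕜' (flat v)
      = ((1 : ℂ) + lam * Complex.I) • ω.flip v := by
    intro v
    ext w
    rw [show (LinearMap.extendTo𝕜' : Dual ℝ W → Dual ℂ W) = Module.Dual.extendRCLike from rfl, LinearMap.extendTo𝕜'_apply]
    simp only [RCLike.I_to_complex, hflat', LinearMap.smul_apply, LinearMap.flip_apply, map_smul, smul_eq_mul]
    set z := ω w v
    have : (Complex.I * z).re = -z.im := by simp
    have h2 : (Complex.I * z).im = z.re := by simp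
    rw [this, h2]
    apply Complex.ext <;> simp <;> ring
  -- compact formula for the sharp map
  have hSc : ∀ f : Module.Dual ℝ W, c₁ f + lam • c₂ f
      = (((1 : ℂ) - lam * Complex.I) / 4) • c (LinearMap.extendTo𝕜' f) := by
    intro f
    rw [hc₁, hc₂]
    simp only [smul_neg, hreal, smul_smul]
    rw [← sub_eq_add_neg, ← sub_smul]
    congr 1
    push_cast
    ring
  have hscal : (((1 : ℂ) - lam * Complex.I) / 4) * ((1 : ℂ) + lam * Complex.I)
      = (((1 + lam ^ 2) / 4 : ℝ) : ℂ) := by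
    have := Complex.I_mul_I
    push_cast
    ring_nf
    rw [Complex.I_sq]
    ring
  -- part 1
  have part1 : ∀ v : W, c₁ (flat v) + lam • c₂ (flat v) = (((1 + lam ^ 2) / 4 : ℝ)) • v := by
    intro v
    rw [hSc, hE, map_smul, hcflip, smul_smul, hscal, ← hreal]
  -- part 3
  have part3 : ∀ f : Module.Dual ℝ W,
      flat (c₁ f + lam • c₂ f) = ((1 + lam ^ 2) / 4 : ℝ) • f := by
    intro f
    ext w
    rw [hSc]
    have hw : ω w ((((1 : ℂ) - lam * Complex.I) / 4) • c (LinearMap.extendTo𝕜' f))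
        = (((1 : ℂ) - lam * Complex.I) / 4) * ((f w : ℂ) - Complex.I * (f (Complex.I • w) : ℂ)) := by
      rw [map_smul, hc, show (LinearMap.extendTo𝕜' : Dual ℝ W → Dual ℂ W) = Module.Dual.extendRCLike from rfl, LinearMap.extendTo𝕜'_apply]
      rfl
    rw [hflat', hw, LinearMap.smul_apply]
    set a := f w
    set b := f (Complex.I • w)
    simp [smul_eq_mul, Complex.div_re, Complex.div_im, Complex.normSq]
    ring
  refine ⟨part1, ⟨?_, ?_⟩, part3⟩
  · intro f g h
    have h2 := congrArg flat h
    rw [part3 f, part3 g] at h2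
    have hμ : ((1 + lam ^ 2) / 4 : ℝ) ≠ 0 := by positivity
    exact smul_right_injective _ hμ h2
  · intro v
    have hμ : ((1 + lam ^ 2) / 4 : ℝ) ≠ 0 := by positivity
    refine ⟨((1 + lam ^ 2) / 4 : ℝ)⁻¹ • flat v, ?_⟩
    have hEsmul : ∀ (r : ℝ) (f : Module.Dual ℝ W),
        (LinearMap.extendTo𝕜' (r • f) : Module.Dual ℂ W) = (r : ℂ) • LinearMap.extendTo𝕜' f := by
      intro r f
      ext w
      rw [show (LinearMap.extendTo𝕜' : Dual ℝ W → Dual ℂ W) = Module.Dual.extendRCLike from rfl]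
      simp only [LinearMap.extendTo𝕜'_apply, RCLike.I_to_complex, Complex.coe_algebraMap,
        LinearMap.smul_apply,
        smul_eq_mul, Complex.ofReal_mul, LinearMap.smul_apply]
      push_cast
      ring
    have hSsmul : ∀ (r : ℝ) (g : Module.Dual ℝ W),
        c₁ (r • g) + lam • c₂ (r • g) = r • (c₁ g + lam • c₂ g) := by
      intro r g
      rw [hSc, hSc, hEsmul, map_smul, ← hreal, smul_comm]
    show c₁ _ + lam • c₂ _ = v
    rw [hSsmul, part1, smul_smul, inv_mul_cancel₀ hμ, one_smul]
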